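/- Every set P of polynomials in K[x_1,…,x_n] that contains at least one nonzero polynomial has a basic set: there exists an ascending set B all of whose elements belong to P such that no ascending set with all elements in P has strictly lower ranking than B. -/

import Mathlib

open MvPolynomial

variable {n : ℕ} {K : Type*} [Field K]

/-- Lexicographic order on monomials (exponent vectors) induced by the variable
ordering `x_1 < ⋯ < x_n`: higher-indexed variables are more significant. -/
def MonLt {n : ℕ} (a b : Fin n →₀ ℕ) : Prop :=
  ∃ i : Fin n, a i < b i ∧ ∀ j : Fin n, i < j → a j = b j

/-- The order `P < Q` on polynomials: `P < Q` iff `lt(P) <_lex lt(Q)`, or the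
heading terms agree and the tails satisfy `P - lm(P) < Q - lm(Q)` (with `0 < R`
for every nonzero `R`).  Equivalently (since only supports matter): the supports
of `P` and `Q` differ and the lex-greatest monomial in their symmetric
difference belongs to the support of `Q`. -/
def PoLt (P Q : MvPolynomial (Fin n) K) : Prop :=
  ∃ m ∈ Q.support \ P.support,
    ∀ m' ∈ (P.support \ Q.support) ∪ (Q.support \ P.support), m' ≠ m → MonLt m' m

/-- `P ≈ Q` : neither `P < Q` nor `Q < P`. -/
def PoEq (P Q : MvPolynomial (Fin n) K) : Prop := ¬ PoLt P Q ∧ ¬ PoLt Q P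

/-- The class of a polynomial: the (1-based) index of its leading variable;
`0` for (nonzero) constants. -/
noncomputable def cls (P : MvPolynomial (Fin n) K) : ℕ :=
  P.vars.sup fun i => i.1 + 1

/-- The leading degree of a polynomial: its degree in its leading variable;
`0` for constants. -/
noncomputable def ldeg (P : MvPolynomial (Fin n) K) : ℕ :=
  WithBot.recBotCoe 0 (fun i => P.degreeOf i) P.vars.max

/-- Ranking of polynomials: `P ≺ Q`. -/
def RankLt (P Q : MvPolynomial (Fin n) K) : Prop :=
  cls P < cls Q ∨ (cls P = cls Q ∧ ldeg P < ldeg Q)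

/-- `P ∼ Q` : neither `P ≺ Q` nor `Q ≺ P`. -/
def RankEq (P Q : MvPolynomial (Fin n) K) : Prop := ¬ RankLt P Q ∧ ¬ RankLt Q P

/-- `P` is reduced w.r.t. a nonconstant `Q`: `deg(P, lv(Q)) < ldeg(Q)`. -/
def ReducedWrt (P Q : MvPolynomial (Fin n) K) : Prop :=
  ∀ i : Fin n, Q.vars.max = (i : WithBot (Fin n)) → P.degreeOf i < Q.degreeOf i

/-- A triangular set: a list of nonconstant polynomials with strictly
increasing leading variables. -/
def IsTriangular (T : List (MvPolynomial (Fin n) K)) : Prop :=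
  (∀ P ∈ T, 0 < cls P) ∧ T.Chain' fun P Q => cls P < cls Q

/-- Ranking of triangular sets (as lists): `T ≺ S`. -/
def TriLt (T S : List (MvPolynomial (Fin n) K)) : Prop :=
  (∃ i, i < T.length ∧ i < S.length ∧
      (∀ j < i, RankEq (T.getD j 0) (S.getD j 0)) ∧
      RankLt (T.getD i 0) (S.getD i 0)) ∨
  (S.length < T.length ∧ ∀ j < S.length, RankEq (T.getD j 0) (S.getD j 0))

/-- `T ∼ S` : neither `T ≺ S` nor `S ≺ T`. -/
def TriEq (T S : List (MvPolynomial (Fin n) K)) : Prop := ¬ TriLt T S ∧ ¬ TriLt S T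

/-- An ascending set: either a triangular set in which every element is reduced
w.r.t. all earlier elements (non-contradictory), or a single nonzero constant
(contradictory). -/
def IsAscending (A : List (MvPolynomial (Fin n) K)) : Prop :=
  (IsTriangular A ∧ A.Pairwise fun P Q => ReducedWrt Q P) ∨
  ∃ a : K, a ≠ 0 ∧ A = [MvPolynomial.C a]

/-- A basic set of a polynomial set `S`: an ascending set contained in `S`
such that no ascending set contained in `S` has strictly lower ranking. -/
def IsBasicSet (B : List (MvPolynomial (Fin n) K))
    (S : Set (MvPolynomial (Fin n) K)) : Prop :=
  IsAscending B ∧ (∀ b ∈ B, b ∈ S) ∧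
    ∀ B' : List (MvPolynomial (Fin n) K),
      IsAscending B' → (∀ b ∈ B', b ∈ S) → ¬ TriLt B' B

/-- A medial set of a polynomial set `S`: an ascending set contained in the
ideal `⟨S⟩` whose ranking is not higher than that of any basic set of `S`. -/
def IsMedialSet (M : List (MvPolynomial (Fin n) K))
    (S : Set (MvPolynomial (Fin n) K)) : Prop :=
  IsAscending M ∧ (∀ F ∈ M, F ∈ Ideal.span S) ∧
    ∀ B : List (MvPolynomial (Fin n) K), IsBasicSet B S → ¬ TriLt B M

/-- The leading coefficient of `P` regarded as a univariate polynomial in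
`x_q`, as a polynomial in the remaining variables. -/
noncomputable def lcOf (P : MvPolynomial (Fin n) K) (q : Fin n) :
    MvPolynomial (Fin n) K :=
  ∑ m ∈ P.support.filter fun m => m q = P.degreeOf q,
    MvPolynomial.monomial (m.erase q) (P.coeff m)

/-- The initial of `P`: its leading coefficient w.r.t. its leading variable. -/
noncomputable def initOf (P : MvPolynomial (Fin n) K) : MvPolynomial (Fin n) K :=
  WithBot.recBotCoe P (fun q => lcOf P q) P.vars.max
section Aux

/-- The rank of a polynomial as a lexicographic pair. -/
noncomputable def rnk (P : MvPolynomial (Fin n) K) : ℕ ×ₗ ℕ := toLex (cls P, ldeg P)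

theorem rankLt_iff (P Q : MvPolynomial (Fin n) K) : RankLt P Q ↔ rnk P < rnk Q := by
  rw [rnk, rnk, Prod.Lex.lt_iff]; rfl

theorem rankEq_iff (P Q : MvPolynomial (Fin n) K) : RankEq P Q ↔ rnk P = rnk Q := by
  constructor
  · rintro ⟨h1, h2⟩
    rw [rankLt_iff] at h1 h2
    exact le_antisymm (not_lt.1 h2) (not_lt.1 h1)
  · intro h
    constructor <;> rw [rankLt_iff, h] <;> exact lt_irrefl _

/-- The padded rank sequence of a list of polynomials. -/
noncomputable def phi (T : List (MvPolynomial (Fin n) K)) : Fin n → WithTop (ℕ ×ₗ ℕ) :=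
  fun i => if (i : ℕ) < T.length then ((rnk (T.getD i 0) : ℕ ×ₗ ℕ) : WithTop (ℕ ×ₗ ℕ)) else ⊤

theorem cls_le (P : MvPolynomial (Fin n) K) : cls P ≤ n :=
  Finset.sup_le fun i _ => i.isLt

theorem length_le_of_ascending (hn : 1 ≤ n) (A : List (MvPolynomial (Fin n) K))
    (hA : IsAscending A) : A.length ≤ n := by
  rcases hA with ⟨⟨hpos, hchain⟩, -⟩ | ⟨a, -, rfl⟩
  · have hmap : (A.map cls).Chain' (· < ·) := by
      exact (List.isChain_map cls).2 hchain
    have hpw : (A.map cls).Pairwise (· < ·) := List.isChain_iff_pairwise.1 hmap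
    have hnd : (A.map cls).Nodup := hpw.imp ne_of_lt
    have hsub : ∀ c ∈ (A.map cls).toFinset, c ∈ Finset.Icc 1 n := by
      intro c hc
      rw [List.mem_toFinset, List.mem_map] at hc
      obtain ⟨P, hP, rfl⟩ := hc
      exact Finset.mem_Icc.2 ⟨hpos P hP, cls_le P⟩
    calc A.length = (A.map cls).length := (List.length_map _).symm
      _ = (A.map cls).toFinset.card := (List.toFinset_card_of_nodup hnd).symm
      _ ≤ (Finset.Icc 1 n).card := Finset.card_le_card hsub
      _ = n := by rw [Nat.card_Icc]; omega
  · simpa using hn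

theorem phi_lt_of_triLt (hn : 1 ≤ n) {T S : List (MvPolynomial (Fin n) K)}
    (hT : T.length ≤ n) (h : TriLt T S) :
    Pi.Lex (· < ·) (fun {_} => (· < ·)) (phi T) (phi S) := by
  rcases h with ⟨i, hiT, hiS, heq, hlt⟩ | ⟨hlen, heq⟩
  · refine ⟨⟨i, lt_of_lt_of_le hiT hT⟩, fun j hj => ?_, ?_⟩
    · have hj' : (j : ℕ) < i := hj
      have e := (rankEq_iff _ _).1 (heq j hj')
      simp only [phi, if_pos (hj'.trans hiT), if_pos (hj'.trans hiS), e]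
    · simp only [phi, if_pos hiT, if_pos hiS]
      exact_mod_cast (rankLt_iff _ _).1 hlt
  · refine ⟨⟨S.length, lt_of_lt_of_le hlen hT⟩, fun j hj => ?_, ?_⟩
    · have hj' : (j : ℕ) < S.length := hj
      have e := (rankEq_iff _ _).1 (heq j hj')
      simp only [phi, if_pos (hj'.trans hlen), if_pos hj', e]
    · simp only [phi, if_pos hlen, if_neg (lt_irrefl S.length)]
      exact WithTop.coe_lt_top _

theorem singleton_ascending (p : MvPolynomial (Fin n) K) (hp : p ≠ 0) :
    IsAscending [p] := by
  rcases eq_or_ne p.vars ∅ with hv | hv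
  · right
    have hc : p = MvPolynomial.C (p.coeff 0) := by
      ext m
      rcases eq_or_ne m 0 with rfl | hm
      · simp
      · rw [MvPolynomial.coeff_C, if_neg (Ne.symm hm)]
        by_contra hcoeff
        obtain ⟨x, hx⟩ := Finsupp.ne_iff.1 hm
        rw [Finsupp.coe_zero, Pi.zero_apply] at hx
        have : x ∈ p.vars := (MvPolynomial.mem_vars x).2
          ⟨m, MvPolynomial.mem_support_iff.2 hcoeff, Finsupp.mem_support_iff.2 hx⟩
        rw [hv] at this; exact absurd this (Finset.notMem_empty x)
    refine ⟨p.coeff 0, fun h0 => hp ?_, by rw [← hc]⟩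
    rw [hc, h0, map_zero]
  · left
    obtain ⟨i, hi⟩ := Finset.nonempty_iff_ne_empty.2 hv
    refine ⟨⟨fun P hP => ?_, List.isChain_singleton _⟩, List.pairwise_singleton _ _⟩
    rw [List.mem_singleton] at hP; subst hP
    exact lt_of_lt_of_le (Nat.succ_pos i) (Finset.le_sup (f := fun i : Fin n => i.1 + 1) hi)

end Aux

/-- every set of polynomials containing a nonzero polynomial has a
basic set. -/
theorem exists_basicSet
    {n : ℕ} {K : Type*} [Field K] (hn : 1 ≤ n)
    (S : Set (MvPolynomial (Fin n) K)) (hS : ∃ p ∈ S, p ≠ 0) :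
    ∃ B : List (MvPolynomial (Fin n) K), IsBasicSet B S := by
  
  classical
  set A : Set (List (MvPolynomial (Fin n) K)) :=
    {A | IsAscending A ∧ ∀ b ∈ A, b ∈ S} with hAdef
  obtain ⟨p, hpS, hp⟩ := hS
  have hne : A.Nonempty := ⟨[p], singleton_ascending p hp, by
    intro b hb; rw [List.mem_singleton] at hb; subst hb; exact hpS⟩
  have hwf : WellFounded (InvImage (Pi.Lex (· < ·) (fun {_} => (· < ·)))
      (phi (n := n) (K := K))) :=
    InvImage.wf _ (Pi.Lex.wellFounded (· < ·) fun _ => wellFounded_lt)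
  obtain ⟨B, hB, hmin⟩ := hwf.has_min A hne
  refine ⟨B, hB.1, hB.2, fun B' hasc hmem hlt => ?_⟩
  exact hmin B' ⟨hasc, hmem⟩
    (phi_lt_of_triLt hn (length_le_of_ascending hn B' hasc) hlt)
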